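/- arXiv:1301.7156 — 5 statements merged into one kernel-verified Lean document; each statement's English description precedes it below -/
import Mathlib

section
/- Let p > 1 and let ν be a probability measure on the circle 𝕋 admitting a continuous density with respect to λ (still denoted ν). Then the potential U_p is twice continuously differentiable on 𝕋 and for every x ∈ 𝕋, U_p''(x) = p(p−1) ∫_𝕋 d(y,x)^{p−2} ν(dy) − p π^{p−2} ν(x+π). -/
open MeasureTheory Real Set Filter

noncomputable section

instance : Fact (0 < 2 * π) := ⟨Real.two_pi_pos⟩

/-- The circle `𝕋 = ℝ/(2πℤ)`. -/
abbrev 𝕋 : Type := AddCircle (2 * π)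

/-- The normalized Haar probability measure `λ` on the circle. -/
def lam : Measure 𝕋 := (ENNReal.ofReal (2 * π))⁻¹ • volume


namespace UpAux

open intervalIntegral
open scoped ENNReal NNReal

lemma aux_integrable {r : ℝ} (hr : -1 < r) {h : ℝ → ℝ} (hh : Continuous h) :
    IntervalIntegrable (fun s => s ^ r * h s) volume 0 π := by
  obtain ⟨M, hM⟩ : ∃ M, ∀ t ∈ Icc (0:ℝ) π, ‖h t‖ ≤ M :=
    isCompact_Icc.exists_bound_of_continuousOn hh.continuousOn
  have hbase : IntervalIntegrable (fun s : ℝ => s ^ r * M) volume 0 π :=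
    (intervalIntegrable_rpow' hr).mul_const M
  rw [intervalIntegrable_iff, uIoc_of_le pi_pos.le] at hbase ⊢
  refine hbase.mono' ?_ ?_
  · exact ((continuousOn_id.rpow_const fun s hs => Or.inl (ne_of_gt hs.1)).mul
      hh.continuousOn).aestronglyMeasurable measurableSet_Ioc
  · filter_upwards [ae_restrict_mem measurableSet_Ioc] with s hs
    have h1 : (0:ℝ) ≤ s ^ r := Real.rpow_nonneg hs.1.le r
    have h2 : ‖h s‖ ≤ M := hM s ⟨hs.1.le, hs.2⟩
    calc ‖s ^ r * h s‖ = s ^ r * ‖h s‖ := by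
          rw [norm_mul, Real.norm_eq_abs, abs_of_nonneg h1]
      _ ≤ s ^ r * M := by exact mul_le_mul_of_nonneg_left h2 h1

def phi (G : ℝ → ℝ) (r x : ℝ) : ℝ := ∫ s in (0:ℝ)..π, s ^ r * G (x - s)

def psi (G : ℝ → ℝ) (r x : ℝ) : ℝ := ∫ s in (0:ℝ)..π, s ^ r * G (x + s)

lemma psi_eq (G : ℝ → ℝ) (r x : ℝ) : psi G r x = phi (fun t => G (-t)) r (-x) := by
  unfold psi phi
  refine intervalIntegral.integral_congr fun s _ => ?_
  show s ^ r * G (x + s) = s ^ r * G (-(-x - s))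
  rw [show -(-x - s) = x + s by ring]

lemma phi_continuous {r : ℝ} (hr : -1 < r) {G : ℝ → ℝ} (hG : Continuous G)
    {M : ℝ} (hM : ∀ t, |G t| ≤ M) : Continuous (phi G r) := by
  apply intervalIntegral.continuous_of_dominated_interval (bound := fun s => s ^ r * M)
  · intro x
    rw [uIoc_of_le pi_pos.le]
    exact ((continuousOn_id.rpow_const fun s hs => Or.inl (ne_of_gt hs.1)).mul
      (hG.comp (continuous_const.sub continuous_id)).continuousOn).aestronglyMeasurable
      measurableSet_Ioc
  · intro x
    filter_upwards with s hs
    rw [uIoc_of_le pi_pos.le] at hs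
    have h1 : (0:ℝ) ≤ s ^ r := Real.rpow_nonneg hs.1.le r
    calc ‖s ^ r * G (x - s)‖ = s ^ r * |G (x - s)| := by
          rw [norm_mul, Real.norm_eq_abs, abs_of_nonneg h1, Real.norm_eq_abs]
      _ ≤ s ^ r * M := mul_le_mul_of_nonneg_left (hM _) h1
  · exact (intervalIntegrable_rpow' hr).mul_const M
  · filter_upwards with s _
    exact continuous_const.mul (hG.comp (continuous_id.sub continuous_const))

lemma psi_continuous {r : ℝ} (hr : -1 < r) {G : ℝ → ℝ} (hG : Continuous G)
    {M : ℝ} (hM : ∀ t, |G t| ≤ M) : Continuous (psi G r) := by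
  have h : Continuous (phi (fun t => G (-t)) r) :=
    phi_continuous hr (hG.comp continuous_neg) (M := M) (fun t => hM (-t))
  have : psi G r = fun x => phi (fun t => G (-t)) r (-x) := funext fun x => psi_eq G r x
  rw [this]
  exact h.comp continuous_neg

lemma phi_hasDerivAt {q : ℝ} (hq : 0 < q) {G : ℝ → ℝ} (hG : Continuous G) (x : ℝ) :
    HasDerivAt (phi G q) (q * phi G (q - 1) x - π ^ q * G (x - π)) x := by
  have hq1 : (-1:ℝ) < q - 1 := by linarith
  have hq0 : (-1:ℝ) < q := by linarith
  -- the primitive of G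
  set H : ℝ → ℝ := fun t => ∫ u in (0:ℝ)..t, G u with hHdef
  have hH : ∀ t, HasDerivAt H (G t) t := fun t =>
    intervalIntegral.integral_hasDerivAt_right (hG.intervalIntegrable _ _)
      (hG.stronglyMeasurable.stronglyMeasurableAtFilter) hG.continuousAt
  have hHc : Continuous H := by
    apply continuous_iff_continuousAt.mpr fun t => (hH t).continuousAt
  have hsq : Continuous fun s : ℝ => s ^ q :=
    Real.continuous_rpow_const hq.le
  -- derivative of x ↦ H (x - s) - H (x - π)
  have hHd : ∀ y s : ℝ, HasDerivAt (fun y => H (y - s) - H (y - π)) (G (y - s) - G (y - π)) y := by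
    intro y s
    have h1 : HasDerivAt (fun y : ℝ => H (y - s)) (G (y - s)) y := by
      exact (hH (y - s)).comp_sub_const y s
    have h2 : HasDerivAt (fun y : ℝ => H (y - π)) (G (y - π)) y := by
      exact (hH (y - π)).comp_sub_const y π
    exact h1.sub h2
  -- Step 1: representation
  have hrep : ∀ y, phi G q y =
      q * ∫ s in (0:ℝ)..π, s ^ (q - 1) * (H (y - s) - H (y - π)) := by
    intro y
    set F : ℝ → ℝ := fun s => -(s ^ q * (H (y - s) - H (y - π))) with hF
    have hFcont : ContinuousOn F (Icc 0 π) := by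
      apply Continuous.continuousOn
      exact (hsq.mul ((hHc.comp (continuous_const.sub continuous_id)).sub
        continuous_const)).neg
    have hFderiv : ∀ s ∈ Ioo (0:ℝ) π, HasDerivWithinAt F
        (s ^ q * G (y - s) - q * (s ^ (q - 1) * (H (y - s) - H (y - π)))) (Ioi s) s := by
      intro s hs
      have h1 : HasDerivAt (fun s : ℝ => s ^ q) (q * s ^ (q - 1)) s :=
        Real.hasDerivAt_rpow_const (Or.inl hs.1.ne')
      have h2 : HasDerivAt (fun s : ℝ => H (y - s) - H (y - π)) (-G (y - s)) s := by
        have := (hH (y - s)).comp_const_sub y s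
        exact HasDerivAt.sub_const (H (y - π)) this
      have := (h1.mul h2).neg
      refine (HasDerivAt.hasDerivWithinAt ?_)
      refine this.congr_deriv ?_
      ring
    have hint : IntervalIntegrable
        (fun s => s ^ q * G (y - s) - q * (s ^ (q - 1) * (H (y - s) - H (y - π))))
        volume 0 π := by
      have i1 : IntervalIntegrable (fun s => s ^ q * G (y - s)) volume 0 π :=
        aux_integrable hq0 (hG.comp (continuous_const.sub continuous_id))
      have i2 : IntervalIntegrable (fun s => s ^ (q - 1) * (H (y - s) - H (y - π)))
          volume 0 π :=
        aux_integrable hq1 (((hHc.comp (continuous_const.sub continuous_id)).sub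
          continuous_const))
      exact i1.sub (i2.const_mul q)
    have h0 := intervalIntegral.integral_eq_sub_of_hasDeriv_right_of_le pi_pos.le
      hFcont hFderiv hint
    have hFpi : F π = 0 := by simp [hF]
    have hF0 : F 0 = 0 := by simp [hF, Real.zero_rpow hq.ne']
    rw [hFpi, hF0, sub_zero] at h0
    have i1 : IntervalIntegrable (fun s => s ^ q * G (y - s)) volume 0 π :=
      aux_integrable hq0 (hG.comp (continuous_const.sub continuous_id))
    have i2 : IntervalIntegrable (fun s => q * (s ^ (q - 1) * (H (y - s) - H (y - π))))
        volume 0 π :=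
      (aux_integrable hq1 (((hHc.comp (continuous_const.sub continuous_id)).sub
        continuous_const))).const_mul q
    rw [intervalIntegral.integral_sub i1 i2, sub_eq_zero] at h0
    rw [phi, h0, intervalIntegral.integral_const_mul]
  -- Step 2: differentiate under the integral sign
  obtain ⟨M, hM⟩ : ∃ M, ∀ t ∈ Icc (x - 1 - π) (x + 1), ‖G t‖ ≤ M :=
    isCompact_Icc.exists_bound_of_continuousOn hG.continuousOn
  have hJ : HasDerivAt (fun y => ∫ s in (0:ℝ)..π, s ^ (q - 1) * (H (y - s) - H (y - π)))
      (∫ s in (0:ℝ)..π, s ^ (q - 1) * (G (x - s) - G (x - π))) x := by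
    have key := intervalIntegral.hasDerivAt_integral_of_dominated_loc_of_deriv_le
      (F := fun y s => s ^ (q - 1) * (H (y - s) - H (y - π)))
      (F' := fun y s => s ^ (q - 1) * (G (y - s) - G (y - π)))
      (bound := fun s => s ^ (q - 1) * (2 * M))
      (a := 0) (b := π) (μ := volume) (x₀ := x) (Metric.ball_mem_nhds x one_pos) ?_ ?_ ?_ ?_ ?_ ?_
    · exact key.2
    · filter_upwards with y
      rw [uIoc_of_le pi_pos.le]
      exact ((continuousOn_id.rpow_const fun s hs => Or.inl (ne_of_gt hs.1)).mul
        (((hHc.comp (continuous_const.sub continuous_id)).sub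
          continuous_const)).continuousOn).aestronglyMeasurable measurableSet_Ioc
    · exact aux_integrable hq1 (((hHc.comp (continuous_const.sub continuous_id)).sub
        continuous_const))
    · rw [uIoc_of_le pi_pos.le]
      exact ((continuousOn_id.rpow_const fun s hs => Or.inl (ne_of_gt hs.1)).mul
        (((hG.comp (continuous_const.sub continuous_id)).sub
          continuous_const)).continuousOn).aestronglyMeasurable measurableSet_Ioc
    · filter_upwards with s hs y hy
      rw [uIoc_of_le pi_pos.le] at hs
      rw [Metric.mem_ball, Real.dist_eq] at hy
      obtain ⟨hyl, hyr⟩ := abs_le.mp hy.le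
      have hb1 : ‖G (y - s)‖ ≤ M :=
        hM _ ⟨by linarith [hs.2], by linarith [hs.1]⟩
      have hb2 : ‖G (y - π)‖ ≤ M := hM _ ⟨by linarith, by linarith [pi_pos]⟩
      have h1 : (0:ℝ) ≤ s ^ (q - 1) := Real.rpow_nonneg hs.1.le _
      calc ‖s ^ (q - 1) * (G (y - s) - G (y - π))‖
          = s ^ (q - 1) * ‖G (y - s) - G (y - π)‖ := by
            rw [norm_mul, Real.norm_eq_abs (s ^ (q - 1)), abs_of_nonneg h1]
        _ ≤ s ^ (q - 1) * (2 * M) := by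
            refine mul_le_mul_of_nonneg_left ?_ h1
            calc ‖G (y - s) - G (y - π)‖ ≤ ‖G (y - s)‖ + ‖G (y - π)‖ := norm_sub_le _ _
              _ ≤ 2 * M := by linarith
    · exact (intervalIntegrable_rpow' hq1).mul_const _
    · filter_upwards with s _ y _
      exact (hHd y s).const_mul _
  -- Step 3: combine
  have hphi_eq : phi G q =
      fun y => q * ∫ s in (0:ℝ)..π, s ^ (q - 1) * (H (y - s) - H (y - π)) := funext hrep
  rw [hphi_eq]
  have hder := hJ.const_mul q
  refine hder.congr_deriv ?_
  have i1 : IntervalIntegrable (fun s => s ^ (q - 1) * G (x - s)) volume 0 π :=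
    aux_integrable hq1 (hG.comp (continuous_const.sub continuous_id))
  have i2 : IntervalIntegrable (fun s => s ^ (q - 1) * G (x - π)) volume 0 π :=
    (intervalIntegrable_rpow' hq1).mul_const _
  have hsplit : (∫ s in (0:ℝ)..π, s ^ (q - 1) * (G (x - s) - G (x - π)))
      = (∫ s in (0:ℝ)..π, s ^ (q - 1) * G (x - s))
        - ∫ s in (0:ℝ)..π, s ^ (q - 1) * G (x - π) := by
    rw [← intervalIntegral.integral_sub i1 i2]
    exact intervalIntegral.integral_congr fun s _ => by ring
  have hval : (∫ s in (0:ℝ)..π, s ^ (q - 1) * G (x - π)) = π ^ q / q * G (x - π) := by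
    rw [intervalIntegral.integral_mul_const, integral_rpow (Or.inl hq1)]
    rw [sub_add_cancel, Real.zero_rpow hq.ne', sub_zero]
  rw [hsplit, hval, phi, mul_sub, div_mul_eq_mul_div, mul_div_assoc']
  rw [mul_comm q (π ^ q * G (x - π)), mul_div_assoc, div_self hq.ne', mul_one]

lemma psi_hasDerivAt {q : ℝ} (hq : 0 < q) {G : ℝ → ℝ} (hG : Continuous G) (x : ℝ) :
    HasDerivAt (psi G q) (π ^ q * G (x + π) - q * psi G (q - 1) x) x := by
  have hG' : Continuous fun t => G (-t) := hG.comp continuous_neg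
  have h := (phi_hasDerivAt hq hG' (-x)).comp x (hasDerivAt_neg x)
  have heq : psi G q = fun y => phi (fun t => G (-t)) q (-y) := funext fun y => psi_eq G q y
  rw [heq]
  refine h.congr_deriv ?_
  rw [psi_eq G (q - 1) x, show -(-x - π) = x + π by ring]
  ring

/-- Conversion: integral against `ν` as an interval integral. -/
lemma nu_integral (g : 𝕋 → ℝ) (hg_cont : Continuous g) (hg_nonneg : ∀ x, 0 ≤ g x)
    (f : 𝕋 → ℝ) (t : ℝ) :
    ∫ y, f y ∂(lam.withDensity fun y => ENNReal.ofReal (g y))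
      = (2 * π)⁻¹ * ∫ u in t..(t + 2 * π), g ↑u * f ↑u := by
  have hmeas : Measurable fun y : 𝕋 => (g y).toNNReal :=
    measurable_real_toNNReal.comp hg_cont.measurable
  rw [show (fun y : 𝕋 => ENNReal.ofReal (g y)) = (fun y : 𝕋 => ((g y).toNNReal : ℝ≥0∞)) from rfl]
  rw [integral_withDensity_eq_integral_smul hmeas]
  unfold lam
  rw [MeasureTheory.integral_smul_measure]
  rw [← AddCircle.intervalIntegral_preimage (2 * π) t]
  simp only [ENNReal.toReal_inv, ENNReal.toReal_ofReal Real.two_pi_pos.le, smul_eq_mul]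
  congr 1
  refine intervalIntegral.integral_congr fun u _ => ?_
  rw [NNReal.smul_def, smul_eq_mul, Real.coe_toNNReal _ (hg_nonneg _)]

lemma dist_coe (x u : ℝ) (h : |x - u| ≤ π) : dist ((x : ℝ) : 𝕋) ((u : ℝ) : 𝕋) = |x - u| := by
  rw [dist_eq_norm, ← AddCircle.coe_sub]
  rw [AddCircle.norm_coe_eq_abs_iff (2 * π) (by positivity)]
  rw [abs_of_pos Real.two_pi_pos]
  linarith

/-- Main conversion lemma. -/
lemma nu_integral_rpow (g : 𝕋 → ℝ) (hg_cont : Continuous g) (hg_nonneg : ∀ x, 0 ≤ g x)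
    {r : ℝ} (hr : -1 < r) (x : ℝ) :
    ∫ y, dist ((x : ℝ) : 𝕋) y ^ r ∂(lam.withDensity fun y => ENNReal.ofReal (g y))
      = (2 * π)⁻¹ * (phi (fun t => g ↑t) r x + psi (fun t => g ↑t) r x) := by
  set G : ℝ → ℝ := fun t => g ↑t with hGdef
  have hGc : Continuous G := hg_cont.comp (AddCircle.continuous_mk' (2 * π))
  rw [nu_integral g hg_cont hg_nonneg _ (x - π)]
  congr 1
  rw [show x - π + 2 * π = x + π by ring]
  -- interval integrability of the two pieces
  have IA' : IntervalIntegrable (fun u => (x - u) ^ r * G u) volume (x - π) x := by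
    have base := (aux_integrable hr (hGc.comp (continuous_const.sub continuous_id))
      : IntervalIntegrable (fun s => s ^ r * G (x - s)) volume 0 π)
    have h2 := base.comp_sub_left x
    simp only [sub_sub_cancel, sub_zero] at h2
    exact h2.symm
  have IB' : IntervalIntegrable (fun u => (u - x) ^ r * G u) volume x (x + π) := by
    have base := (aux_integrable hr (hGc.comp (continuous_const.add continuous_id))
      : IntervalIntegrable (fun s => s ^ r * G (x + s)) volume 0 π)
    have h2 := base.comp_sub_right x
    simp only [zero_add, add_comm π x] at h2
    have h3 : (fun u => (u - x) ^ r * G (x + (u - x))) = fun u => (u - x) ^ r * G u := by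
      funext u; rw [show x + (u - x) = u by ring]
    rwa [h3] at h2
  have hdA : ∀ u ∈ Icc (x - π) x, g ↑u * dist ((x:ℝ):𝕋) ↑u ^ r = (x - u) ^ r * G u := by
    intro u hu
    rw [dist_coe x u (by rw [abs_of_nonneg (by linarith [hu.2])]; linarith [hu.1]),
      abs_of_nonneg (by linarith [hu.2]), mul_comm]
  have hdB : ∀ u ∈ Icc x (x + π), g ↑u * dist ((x:ℝ):𝕋) ↑u ^ r = (u - x) ^ r * G u := by
    intro u hu
    rw [dist_coe x u (by rw [abs_of_nonpos (by linarith [hu.1])]; linarith [hu.2]),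
      abs_of_nonpos (by linarith [hu.1]), neg_sub, mul_comm]
  have IA : IntervalIntegrable (fun u => g ↑u * dist ((x:ℝ):𝕋) ↑u ^ r) volume (x - π) x := by
    rw [intervalIntegrable_iff] at IA' ⊢
    apply IA'.congr
    rw [uIoc_of_le (by linarith [pi_pos] : x - π ≤ x)]
    filter_upwards [ae_restrict_mem measurableSet_Ioc] with u hu
    exact (hdA u ⟨hu.1.le, hu.2⟩).symm
  have IB : IntervalIntegrable (fun u => g ↑u * dist ((x:ℝ):𝕋) ↑u ^ r) volume x (x + π) := by
    rw [intervalIntegrable_iff] at IB' ⊢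
    apply IB'.congr
    rw [uIoc_of_le (by linarith [pi_pos] : x ≤ x + π)]
    filter_upwards [ae_restrict_mem measurableSet_Ioc] with u hu
    exact (hdB u ⟨hu.1.le, hu.2⟩).symm
  rw [← intervalIntegral.integral_add_adjacent_intervals IA IB]
  congr 1
  · -- left piece equals phi
    rw [intervalIntegral.integral_congr (g := fun u => (x - u) ^ r * G u)
      (fun u hu => hdA u (by rwa [uIcc_of_le (by linarith [pi_pos] : x - π ≤ x)] at hu))]
    rw [phi]
    have := intervalIntegral.integral_comp_sub_left (a := 0) (b := π)
      (fun u => (x - u) ^ r * G u) x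
    rw [sub_zero] at this
    rw [← this]
    refine intervalIntegral.integral_congr fun s _ => ?_
    rw [sub_sub_cancel]
  · -- right piece equals psi
    rw [intervalIntegral.integral_congr (g := fun u => (u - x) ^ r * G u)
      (fun u hu => hdB u (by rwa [uIcc_of_le (by linarith [pi_pos] : x ≤ x + π)] at hu))]
    rw [psi]
    have := intervalIntegral.integral_comp_add_left (a := 0) (b := π)
      (fun u => (u - x) ^ r * G u) x
    rw [add_zero] at this
    rw [← this]
    refine intervalIntegral.integral_congr fun s _ => ?_
    rw [add_sub_cancel_left]

end UpAux

open UpAux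

/-- if `ν` has a continuous density `g` w.r.t. `λ` and `p > 1`, then the
potential `U_p(x) = ∫ d(x,y)^p ν(dy)` (viewed as a `2π`-periodic function on `ℝ`)
is `C²` and `U_p''(x) = p(p-1) ∫ d(y,x)^(p-2) ν(dy) - p π^(p-2) g(x+π)`. -/
theorem Up_second_derivative
    (p : ℝ) (hp : 1 < p)
    (g : 𝕋 → ℝ) (hg_cont : Continuous g) (hg_nonneg : ∀ x, 0 ≤ g x)
    (ν : Measure 𝕋) [IsProbabilityMeasure ν]
    (hν : ν = lam.withDensity fun y => ENNReal.ofReal (g y))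
    (Up : ℝ → ℝ)
    (hUp : ∀ x : ℝ, Up x = ∫ y, dist ((x : 𝕋)) y ^ p ∂ν) :
    ContDiff ℝ 2 Up ∧
      ∀ x : ℝ,
        deriv (deriv Up) x =
          p * (p - 1) * (∫ y, dist y ((x : 𝕋)) ^ (p - 2) ∂ν)
            - p * π ^ (p - 2) * g ((x : 𝕋) + ((π : ℝ) : 𝕋)) := by
  have hπ := pi_pos
  set G : ℝ → ℝ := fun t => g ↑t with hGdef
  have hGc : Continuous G := hg_cont.comp (AddCircle.continuous_mk' (2 * π))
  obtain ⟨M, hM⟩ : ∃ M, ∀ t : ℝ, |G t| ≤ M := by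
    obtain ⟨M, hM⟩ : ∃ M, ∀ y ∈ (univ : Set 𝕋), ‖g y‖ ≤ M :=
      isCompact_univ.exists_bound_of_continuousOn hg_cont.continuousOn
    exact ⟨M, fun t => hM _ (mem_univ _)⟩
  have hGper : ∀ t : ℝ, G (t + 2 * π) = G t := fun t =>
    congrArg g (AddCircle.coe_add_period (2 * π) t)
  have hGpi : ∀ x : ℝ, G (x - π) = G (x + π) := by
    intro x
    rw [← hGper (x - π), show x - π + 2 * π = x + π by ring]
  -- representation of Up
  have hrepUp : ∀ x : ℝ, Up x = (2 * π)⁻¹ * (phi G p x + psi G p x) := by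
    intro x
    rw [hUp, hν, nu_integral_rpow g hg_cont hg_nonneg (by linarith) x]
  -- first derivative
  set V : ℝ → ℝ := fun x => (2 * π)⁻¹ * p * (phi G (p - 1) x - psi G (p - 1) x) with hVdef
  have hUp' : ∀ x : ℝ, HasDerivAt Up (V x) x := by
    intro x
    rw [show Up = fun x => (2 * π)⁻¹ * (phi G p x + psi G p x) from funext hrepUp]
    have h := ((phi_hasDerivAt (by linarith : (0:ℝ) < p) hGc x).add
      (psi_hasDerivAt (by linarith : (0:ℝ) < p) hGc x)).const_mul ((2 * π)⁻¹)
    refine h.congr_deriv ?_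
    rw [hVdef, hGpi x]
    ring
  -- second derivative
  set W : ℝ → ℝ := fun x =>
    p * (p - 1) * ((2 * π)⁻¹ * (phi G (p - 2) x + psi G (p - 2) x))
      - p * π ^ (p - 2) * G (x + π) with hWdef
  have hV' : ∀ x : ℝ, HasDerivAt V (W x) x := by
    intro x
    have h1 := phi_hasDerivAt (by linarith : (0:ℝ) < p - 1) hGc x
    have h2 := psi_hasDerivAt (by linarith : (0:ℝ) < p - 1) hGc x
    rw [show p - 1 - 1 = p - 2 by ring] at h1 h2
    have h := ((h1.sub h2).const_mul ((2 * π)⁻¹ * p))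
    refine h.congr_deriv ?_
    rw [hWdef, hGpi x, show p - 1 = (p - 2) + 1 by ring,
      Real.rpow_add_one pi_pos.ne' (p - 2)]
    field_simp
    ring
  have hUd : Differentiable ℝ Up := fun x => (hUp' x).differentiableAt
  have hdUp : deriv Up = V := funext fun x => (hUp' x).deriv
  have hVd : Differentiable ℝ V := fun x => (hV' x).differentiableAt
  have hdV : deriv V = W := funext fun x => (hV' x).deriv
  have hWc : Continuous W := by
    have hp2 : (-1:ℝ) < p - 2 := by linarith
    have c1 : Continuous (phi G (p - 2)) := phi_continuous hp2 hGc hM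
    have c2 : Continuous (psi G (p - 2)) := psi_continuous hp2 hGc hM
    have c3 : Continuous fun x : ℝ => G (x + π) :=
      hGc.comp (continuous_id.add continuous_const)
    exact (continuous_const.mul ((continuous_const.mul (c1.add c2)))).sub
      (continuous_const.mul c3)
  constructor
  · rw [show (2 : WithTop ℕ∞) = 1 + 1 from rfl, contDiff_succ_iff_deriv]
    refine ⟨hUd, ?_, ?_⟩
    · intro h
      exact absurd h WithTop.one_ne_top
    · rw [contDiff_one_iff_deriv, hdUp, hdV]
      exact ⟨hVd, hWc⟩
  · intro x
    rw [hdUp, hdV, hWdef]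
    have : ∫ y, dist y ((x : ℝ) : 𝕋) ^ (p - 2) ∂ν
        = (2 * π)⁻¹ * (phi G (p - 2) x + psi G (p - 2) x) := by
      have hcomm : ∀ y : 𝕋, dist y ((x : ℝ) : 𝕋) = dist ((x : ℝ) : 𝕋) y :=
        fun y => dist_comm _ _
      simp_rw [hcomm]
      rw [hν, nu_integral_rpow g hg_cont hg_nonneg (by linarith) x]
    rw [this, show ((x : 𝕋) + ((π : ℝ) : 𝕋)) = (((x + π : ℝ)) : 𝕋) from
      (AddCircle.coe_add (2 * π) x π).symm]
end
end

section
/- Let ν be a probability measure on the circle 𝕋 admitting a continuous density with respect to λ (still denoted ν). Then the potential U₁ is twice continuously differentiable on 𝕋 and for every x ∈ 𝕋, U₁''(x) = (ν(x) − ν(x+π))/π. -/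
open MeasureTheory Real Set Filter

open scoped ENNReal NNReal

noncomputable section

/-- if `ν` has a continuous density `g` w.r.t. `λ`, then the potential
`U₁(x) = ∫ d(x,y) ν(dy)` (viewed as a `2π`-periodic function on `ℝ`) is `C²` and
`U₁''(x) = (g(x) - g(x+π))/π`. -/
theorem U1_second_derivative
    (g : 𝕋 → ℝ) (hg_cont : Continuous g) (hg_nonneg : ∀ x, 0 ≤ g x)
    (ν : Measure 𝕋) [IsProbabilityMeasure ν]
    (hν : ν = lam.withDensity fun y => ENNReal.ofReal (g y))
    (U1 : ℝ → ℝ)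
    (hU1 : ∀ x : ℝ, U1 x = ∫ y, dist ((x : 𝕋)) y ∂ν) :
    ContDiff ℝ 2 U1 ∧
      ∀ x : ℝ,
        deriv (deriv U1) x = (g ((x : 𝕋)) - g ((x : 𝕋) + ((π : ℝ) : 𝕋))) / π := by
  have hπ := Real.pi_pos
  have h2π : (0:ℝ) < 2*π := Real.two_pi_pos
  set G : ℝ → ℝ := fun t => g ((t:ℝ):𝕋) with hGdef
  have hGc : Continuous G := hg_cont.comp (AddCircle.continuous_mk' _)
  have hper : ∀ x : ℝ, G (x - π) = G (x + π) := by
    intro x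
    have h1 : ((x - π + 2*π : ℝ) : 𝕋) = ((x - π : ℝ) : 𝕋) := AddCircle.coe_add_period _ _
    have h2 : x - π + 2*π = x + π := by ring
    calc G (x - π) = g ((x - π + 2*π : ℝ) : 𝕋) := by rw [h1]
    _ = G (x + π) := by rw [h2]
  set A : ℝ → ℝ := fun u => ∫ t in (0:ℝ)..u, G t with hAdef
  set B : ℝ → ℝ := fun u => ∫ t in (0:ℝ)..u, t * G t with hBdef
  set W : ℝ → ℝ := fun y =>
    (2*π)⁻¹ * (y * (2 * A y - A (y-π) - A (y+π)) - 2 * B y + B (y-π) + B (y+π)) with hWdef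
  set V : ℝ → ℝ := fun y => (2*π)⁻¹ * (2 * A y - A (y-π) - A (y+π)) with hVdef
  have hBc : Continuous fun t : ℝ => t * G t := continuous_id'.mul hGc
  -- Step 1: representation of U1 as W
  have hU1W : U1 = W := by
    funext x
    have hdc : Continuous fun t : ℝ => dist ((x:𝕋)) ((t:ℝ):𝕋) :=
      continuous_const.dist (AddCircle.continuous_mk' _)
    have step1 : U1 x = (2*π)⁻¹ * ∫ t in (x-π)..(x+π), G t * dist ((x : 𝕋)) ((t:ℝ):𝕋) := by
      rw [hU1 x, hν]
      have hmeas : Measurable fun y : 𝕋 => (g y).toNNReal :=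
        measurable_real_toNNReal.comp hg_cont.measurable
      have e1 : (lam.withDensity fun y => ENNReal.ofReal (g y))
          = lam.withDensity fun y => ((g y).toNNReal : ℝ≥0∞) := rfl
      rw [e1, integral_withDensity_eq_integral_smul hmeas]
      have e2 : ∀ y : 𝕋, (g y).toNNReal • dist ((x:𝕋)) y = g y * dist ((x:𝕋)) y := by
        intro y
        rw [NNReal.smul_def, smul_eq_mul, Real.coe_toNNReal _ (hg_nonneg y)]
      rw [integral_congr_ae (Eventually.of_forall e2)]
      rw [lam, integral_smul_measure]
      rw [ENNReal.toReal_inv, ENNReal.toReal_ofReal h2π.le, smul_eq_mul]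
      congr 1
      rw [← AddCircle.integral_preimage (2*π) (x-π) (fun y => g y * dist ((x:𝕋)) y)]
      rw [intervalIntegral.integral_of_le (by linarith)]
      ring_nf
      rfl
    rw [step1]
    have hdist : ∀ t : ℝ, |x - t| ≤ π → dist ((x:𝕋)) ((t:ℝ):𝕋) = |x - t| := by
      intro t ht
      rw [dist_eq_norm, ← AddCircle.coe_sub]
      exact (AddCircle.norm_coe_eq_abs_iff _ h2π.ne').mpr (by rw [abs_of_pos h2π]; linarith)
    have hlin : ∀ a b : ℝ, (∫ t in a..b, G t * (x - t))
        = x * (A b - A a) - (B b - B a) := by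
      intro a b
      have h1 : (∫ t in a..b, G t * (x - t)) = ∫ t in a..b, (x * G t - t * G t) :=
        intervalIntegral.integral_congr fun t _ => by ring
      rw [h1, intervalIntegral.integral_sub ((show Continuous fun t : ℝ => x * G t from continuous_const.mul hGc).intervalIntegrable _ _)
        (hBc.intervalIntegrable _ _), intervalIntegral.integral_const_mul,
        hAdef, hBdef]
      simp only []
      rw [intervalIntegral.integral_interval_sub_left (hGc.intervalIntegrable _ _)
          (hGc.intervalIntegrable _ _),
        intervalIntegral.integral_interval_sub_left (hBc.intervalIntegrable _ _)
          (hBc.intervalIntegrable _ _)]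
    have hsplit : (∫ t in (x-π)..(x+π), G t * dist ((x:𝕋)) ((t:ℝ):𝕋))
        = (∫ t in (x-π)..x, G t * dist ((x:𝕋)) ((t:ℝ):𝕋))
          + ∫ t in x..(x+π), G t * dist ((x:𝕋)) ((t:ℝ):𝕋) :=
      (intervalIntegral.integral_add_adjacent_intervals
        ((hGc.mul hdc).intervalIntegrable _ _) ((hGc.mul hdc).intervalIntegrable _ _)).symm
    have hleft : (∫ t in (x-π)..x, G t * dist ((x:𝕋)) ((t:ℝ):𝕋))
        = ∫ t in (x-π)..x, G t * (x - t) := by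
      refine intervalIntegral.integral_congr fun t ht => ?_
      rw [uIcc_of_le (by linarith)] at ht
      rw [hdist t (by rw [abs_of_nonneg (by linarith [ht.2])]; linarith [ht.1]),
        abs_of_nonneg (by linarith [ht.2])]
    have hright : (∫ t in x..(x+π), G t * dist ((x:𝕋)) ((t:ℝ):𝕋))
        = ∫ t in x..(x+π), G t * (-(x - t)) := by
      refine intervalIntegral.integral_congr fun t ht => ?_
      rw [uIcc_of_le (by linarith)] at ht
      rw [hdist t (by rw [abs_of_nonpos (by linarith [ht.1])]; linarith [ht.2]),
        abs_of_nonpos (by linarith [ht.1])]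
    have hlin2 : (∫ t in x..(x+π), G t * (-(x - t)))
        = -(x * (A (x+π) - A x) - (B (x+π) - B x)) := by
      rw [← hlin x (x+π), ← intervalIntegral.integral_neg]
      exact intervalIntegral.integral_congr fun t _ => by ring
    rw [hsplit, hleft, hright, hlin (x-π) x, hlin2, hWdef]
    ring
  -- derivatives of A and B
  have hA : ∀ u : ℝ, HasDerivAt A (G u) u :=
    fun u => (hGc.integral_hasStrictDerivAt 0 u).hasDerivAt
  have hB : ∀ u : ℝ, HasDerivAt B (u * G u) u :=
    fun u => (hBc.integral_hasStrictDerivAt 0 u).hasDerivAt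
  have hshift : ∀ x : ℝ,
      HasDerivAt (fun y => A (y-π)) (G (x-π)) x ∧ HasDerivAt (fun y => A (y+π)) (G (x+π)) x ∧
      HasDerivAt (fun y => B (y-π)) ((x-π) * G (x-π)) x ∧
      HasDerivAt (fun y => B (y+π)) ((x+π) * G (x+π)) x := by
    intro x
    have hsub : HasDerivAt (fun y : ℝ => y - π) 1 x := (hasDerivAt_id x).sub_const π
    have hadd : HasDerivAt (fun y : ℝ => y + π) 1 x := (hasDerivAt_id x).add_const π
    exact ⟨by have h := (hA (x-π)).comp x hsub; rw [mul_one] at h; exact h,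
      by have h := (hA (x+π)).comp x hadd; rw [mul_one] at h; exact h,
      by have h := (hB (x-π)).comp x hsub; rw [mul_one] at h; exact h,
      by have h := (hB (x+π)).comp x hadd; rw [mul_one] at h; exact h⟩
  -- U1 has derivative V
  have hUV : ∀ x : ℝ, HasDerivAt U1 (V x) x := by
    intro x
    obtain ⟨hAm, hAp, hBm, hBp⟩ := hshift x
    have h := (((((hasDerivAt_id x).mul
        ((((hA x).const_mul 2).sub hAm).sub hAp)).sub ((hB x).const_mul 2)).add hBm).add
        hBp).const_mul ((2*π)⁻¹)
    rw [hU1W, hWdef]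
    refine h.congr_deriv ?_
    simp only [id_eq, hVdef, Pi.sub_apply]
    rw [hper x]
    ring
  have hdU1 : deriv U1 = V := funext fun x => (hUV x).deriv
  -- V has derivative (G x - G (x+π))/π
  have hV : ∀ x : ℝ, HasDerivAt V ((G x - G (x+π)) / π) x := by
    intro x
    obtain ⟨hAm, hAp, _, _⟩ := hshift x
    have h := ((((hA x).const_mul 2).sub hAm).sub hAp).const_mul ((2*π)⁻¹)
    rw [hVdef]
    refine h.congr_deriv ?_
    rw [hper x]
    field_simp
    ring
  have hdV : deriv V = fun x => (G x - G (x+π)) / π := funext fun x => (hV x).deriv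
  have hcontV' : Continuous fun x : ℝ => (G x - G (x+π)) / π :=
    (hGc.sub (hGc.comp (continuous_id.add continuous_const))).div_const π
  constructor
  · have h1 : ContDiff ℝ 1 V := contDiff_one_iff_deriv.mpr
      ⟨fun x => (hV x).differentiableAt, by rw [hdV]; exact hcontV'⟩
    have h2 : (2 : WithTop ℕ∞) = 1 + 1 := by norm_num
    rw [h2]
    refine contDiff_succ_iff_deriv.mpr ⟨fun x => (hUV x).differentiableAt, ?_, ?_⟩
    · intro h; simp at h
    · rw [hdU1]; exact h1
  · intro x
    rw [hdU1, hdV]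
    simp only [hGdef]
    rw [AddCircle.coe_add]
end
end

section
/- Let p ≥ 1 and let ν be a probability measure on the circle 𝕋 admitting a continuous density with respect to λ. Then U_p is continuously differentiable on 𝕋 and for every x ∈ 𝕋, U_p'(x) = −p ∫_𝕋 d(x,y)^{p−1} σ(x,y) ν(dy) (with the convention d(x,y)^{p−1} = 1 when p = 1 and y = x). -/
open MeasureTheory Real Set Filter
open Topology

noncomputable section

/-- The representative of a point of the circle in `(-π, π]`. -/
def rep (z : 𝕋) : ℝ := ((AddCircle.equivIoc (2 * π) (-π) z : Set.Ioc (-π) (-π + 2 * π)) : ℝ)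

/-- `σ(x,y) = +1` if the representative of `y - x` lies in `[0, π]`, `-1` otherwise. -/
def sgn (x y : 𝕋) : ℝ := if 0 ≤ rep (y - x) then 1 else -1

lemma coe_rep (z : 𝕋) : ((rep z : ℝ) : 𝕋) = z := (AddCircle.equivIoc (2*π) (-π)).symm_apply_apply z
lemma rep_mem (z : 𝕋) : rep z ∈ Ioc (-π) (-π + 2*π) := (AddCircle.equivIoc (2*π) (-π) z).2
lemma rep_coe {u : ℝ} (hu : u ∈ Ioc (-π) (-π + 2*π)) : rep ((u:ℝ):𝕋) = u := by
  have : (AddCircle.equivIoc (2*π) (-π)) u = ⟨u, hu⟩ := by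
    rw [Equiv.apply_eq_iff_eq_symm_apply]; rfl
  simp [rep, this]
lemma measurable_rep : Measurable rep :=
  measurable_subtype_coe.comp (AddCircle.measurableEquivIoc (2*π) (-π)).measurable


lemma coe_two_pi : (((2*π : ℝ)) : 𝕋) = 0 := AddCircle.coe_period (2*π)

lemma key_local (y : 𝕋) (t : ℝ) (h1 : ((t:ℝ):𝕋) ≠ y) (h2 : ((t:ℝ):𝕋) ≠ y + ((π:ℝ):𝕋)) :
    ∃ c : ℝ, c ≠ t ∧ |c - t| < π ∧
      (∀ᶠ s in 𝓝 t, dist (((s:ℝ):𝕋)) y = |c - s| ∧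
        sgn (((s:ℝ):𝕋)) y = if 0 ≤ c - s then (1:ℝ) else -1) := by
  have h2π : (2 * π : ℝ) ≠ 0 := by positivity
  obtain ⟨r, hrcoe, hmem⟩ : ∃ r : ℝ, ((r:ℝ):𝕋) = y - (t:ℝ) ∧ r ∈ Ioc (-π) (-π + 2*π) :=
    ⟨rep (y - (t:ℝ)), coe_rep _, rep_mem _⟩
  have hy : y = ((t + r : ℝ) : 𝕋) := by
    rw [AddCircle.coe_add, hrcoe]; abel
  have hr0 : r ≠ 0 := by
    intro h
    exact h1 (by rw [hy, h, add_zero])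
  have hrpi : r ≠ π := by
    intro h
    apply h2
    rw [hy, h, ← AddCircle.coe_add, show t + π + π = t + 2*π by ring, AddCircle.coe_add,
      coe_two_pi, add_zero]
  have hrabs : |r| < π := by
    rcases hmem with ⟨hm1, hm2⟩
    have : r ≤ π := by linarith
    exact abs_lt.mpr ⟨hm1, lt_of_le_of_ne this hrpi⟩
  refine ⟨t + r, by simpa using hr0, by simpa using hrabs, ?_⟩
  have hδ : 0 < π - |r| := by linarith
  filter_upwards [Metric.ball_mem_nhds t hδ] with s hs
  rw [Metric.mem_ball, Real.dist_eq] at hs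
  have hr1 := neg_abs_le r
  have hr2 := le_abs_self r
  have habs : |t + r - s| < π := by
    rcases abs_lt.mp hs with ⟨u1, u2⟩
    exact abs_lt.mpr ⟨by linarith, by linarith⟩
  have hmem' : t + r - s ∈ Ioc (-π) (-π + 2*π) := by
    rcases abs_lt.mp habs with ⟨u1, u2⟩
    exact ⟨by linarith, by linarith⟩
  constructor
  · rw [hy, dist_eq_norm, ← AddCircle.coe_sub, abs_sub_comm]
    rw [AddCircle.norm_coe_eq_abs_iff _ h2π,
      show |(2*π : ℝ)| = 2*π from abs_of_pos (by positivity), abs_sub_comm]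
    linarith [habs.le]
  · rw [sgn, hy, ← AddCircle.coe_sub]
    rw [show ((t + r : ℝ)) - s = t + r - s by ring] at hmem' ⊢
    rw [rep_coe hmem']

lemma hasDerivAt_dp (p : ℝ) (hp : 1 ≤ p) (y : 𝕋) (t : ℝ)
    (h1 : ((t:ℝ):𝕋) ≠ y) (h2 : ((t:ℝ):𝕋) ≠ y + ((π:ℝ):𝕋)) :
    HasDerivAt (fun s : ℝ => dist (((s:ℝ):𝕋)) y ^ p)
      (-p * (dist (((t:ℝ):𝕋)) y ^ (p-1) * sgn (((t:ℝ):𝕋)) y)) t := by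
  obtain ⟨c, hct, hcπ, hev⟩ := key_local y t h1 h2
  obtain ⟨hd0, hs0⟩ := hev.self_of_nhds
  rcases lt_or_gt_of_ne hct with hlt | hgt
  · -- c < t : dist s y = s - c near t, sgn = -1
    have hev' : ∀ᶠ s in 𝓝 t, dist (((s:ℝ):𝕋)) y ^ p = (s - c) ^ p := by
      filter_upwards [hev, Metric.ball_mem_nhds t (sub_pos.mpr hlt)] with s hs hs'
      rw [Metric.mem_ball, Real.dist_eq] at hs'
      have : c - s < 0 := by rcases abs_lt.mp hs' with ⟨u1,u2⟩; linarith
      rw [hs.1, abs_of_neg this]; ring_nf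
    have hD : HasDerivAt (fun s : ℝ => (s - c) ^ p) (1 * p * (t - c) ^ (p-1)) t := by
      simpa using ((hasDerivAt_id t).sub_const c).rpow_const (Or.inr hp)
    have hgoal := hD.congr_of_eventuallyEq (hev'.mono fun s hs => hs)
    refine hgoal.congr_deriv ?_
    have hsc : sgn (((t:ℝ):𝕋)) y = -1 := by
      rw [hs0, if_neg (by push_neg; linarith)]
    rw [hd0, abs_of_neg (by linarith : c - t < 0), hsc]
    ring_nf
  · -- t < c : dist s y = c - s near t, sgn = 1
    have hev' : ∀ᶠ s in 𝓝 t, dist (((s:ℝ):𝕋)) y ^ p = (c - s) ^ p := by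
      filter_upwards [hev, Metric.ball_mem_nhds t (sub_pos.mpr hgt)] with s hs hs'
      rw [Metric.mem_ball, Real.dist_eq] at hs'
      have : 0 < c - s := by rcases abs_lt.mp hs' with ⟨u1,u2⟩; linarith
      rw [hs.1, abs_of_pos this]
    have hD : HasDerivAt (fun s : ℝ => (c - s) ^ p) (-1 * p * (c - t) ^ (p-1)) t := by
      simpa using ((hasDerivAt_id t).const_sub c).rpow_const (Or.inr hp)
    have hgoal := hD.congr_of_eventuallyEq (hev'.mono fun s hs => hs)
    refine hgoal.congr_deriv ?_
    have hsc : sgn (((t:ℝ):𝕋)) y = 1 := by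
      rw [hs0, if_pos (by linarith)]
    rw [hd0, abs_of_pos (by linarith : 0 < c - t), hsc]
    ring_nf

lemma continuousAt_J (p : ℝ) (hp : 1 ≤ p) (y : 𝕋) (t : ℝ)
    (h1 : ((t:ℝ):𝕋) ≠ y) (h2 : ((t:ℝ):𝕋) ≠ y + ((π:ℝ):𝕋)) :
    ContinuousAt (fun s : ℝ => dist (((s:ℝ):𝕋)) y ^ (p-1) * sgn (((s:ℝ):𝕋)) y) t := by
  obtain ⟨c, hct, hcπ, hev⟩ := key_local y t h1 h2
  rcases lt_or_gt_of_ne hct with hlt | hgt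
  · have hev' : ∀ᶠ s in 𝓝 t, (s - c) ^ (p-1) * (-1) =
        dist (((s:ℝ):𝕋)) y ^ (p-1) * sgn (((s:ℝ):𝕋)) y := by
      filter_upwards [hev, Metric.ball_mem_nhds t (sub_pos.mpr hlt)] with s hs hs'
      rw [Metric.mem_ball, Real.dist_eq] at hs'
      have hneg : c - s < 0 := by rcases abs_lt.mp hs' with ⟨u1,u2⟩; linarith
      rw [hs.1, hs.2, abs_of_neg hneg, if_neg (by push_neg; linarith)]
      ring_nf
    have : ContinuousAt (fun s : ℝ => (s - c) ^ (p-1) * (-1)) t :=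
      (((continuous_id.sub continuous_const).rpow_const
        (fun x => Or.inr (by linarith))).mul continuous_const).continuousAt
    exact this.congr hev'
  · have hev' : ∀ᶠ s in 𝓝 t, (c - s) ^ (p-1) * 1 =
        dist (((s:ℝ):𝕋)) y ^ (p-1) * sgn (((s:ℝ):𝕋)) y := by
      filter_upwards [hev, Metric.ball_mem_nhds t (sub_pos.mpr hgt)] with s hs hs'
      rw [Metric.mem_ball, Real.dist_eq] at hs'
      have hpos : 0 < c - s := by rcases abs_lt.mp hs' with ⟨u1,u2⟩; linarith
      rw [hs.1, hs.2, abs_of_pos hpos, if_pos (by linarith)]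
    have : ContinuousAt (fun s : ℝ => (c - s) ^ (p-1) * 1) t :=
      (((continuous_const.sub continuous_id).rpow_const
        (fun x => Or.inr (by linarith))).mul continuous_const).continuousAt
    exact this.congr hev'

lemma countable_fiber (z : 𝕋) : {t : ℝ | ((t:ℝ):𝕋) = z}.Countable := by
  obtain ⟨t₀, rfl⟩ := QuotientAddGroup.mk_surjective z
  apply Set.Countable.mono _ (Set.countable_range fun n : ℤ => t₀ + n • (2*π))
  intro t ht
  have h0 : ((t - t₀ : ℝ) : 𝕋) = 0 := by
    rw [AddCircle.coe_sub, ht, sub_self]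
  obtain ⟨n, hn⟩ := (AddCircle.coe_eq_zero_iff (2*π)).mp h0
  exact ⟨n, by show t₀ + n • (2*π) = t; rw [hn]; ring⟩

lemma nu_atomless (g : 𝕋 → ℝ) (ν : Measure 𝕋)
    (hν : ν = lam.withDensity fun y => ENNReal.ofReal (g y)) (z : 𝕋) : ν {z} = 0 := by
  have hvol : (volume : Measure 𝕋) {z} = 0 := by
    have := AddCircle.volume_closedBall (T := 2*π) (x := z) 0
    simpa [Metric.closedBall_zero, min_eq_right Real.two_pi_pos.le] using this
  have hlam : lam {z} = 0 := by
    rw [lam, Measure.smul_apply, hvol, smul_zero]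
  rw [hν]
  exact (MeasureTheory.withDensity_absolutelyContinuous lam _) hlam

lemma dist_le_pi (x y : 𝕋) : dist x y ≤ π := by
  rw [dist_eq_norm]
  have := AddCircle.norm_le_half_period (p := 2*π) (x := x - y) (by positivity)
  rwa [show |(2*π:ℝ)| = 2*π from abs_of_pos (by positivity),
    show (2*π)/2 = π by ring] at this

lemma measurable_J_uncurry (p : ℝ) (hp : 1 ≤ p) :
    Measurable (fun q : ℝ × 𝕋 => dist ((q.1:ℝ):𝕋) q.2 ^ (p-1) * sgn ((q.1:ℝ):𝕋) q.2) := by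
  have h1 : Measurable fun q : ℝ × 𝕋 => dist ((q.1:ℝ):𝕋) q.2 ^ (p-1) :=
    ((Continuous.dist ((AddCircle.continuous_mk' (2*π)).comp continuous_fst)
      continuous_snd).rpow_const (fun q => Or.inr (by linarith))).measurable
  have h2 : Measurable fun q : ℝ × 𝕋 => sgn ((q.1:ℝ):𝕋) q.2 := by
    have hm : Measurable fun q : ℝ × 𝕋 => rep (q.2 - ((q.1:ℝ):𝕋)) :=
      measurable_rep.comp
        ((continuous_snd.sub ((AddCircle.continuous_mk' (2*π)).comp continuous_fst)).measurable)
    exact Measurable.ite (measurableSet_le measurable_const hm) measurable_const measurable_const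
  exact h1.mul h2

lemma J_abs_le (p : ℝ) (hp : 1 ≤ p) (t : ℝ) (y : 𝕋) :
    |dist ((t:ℝ):𝕋) y ^ (p-1) * sgn ((t:ℝ):𝕋) y| ≤ π ^ (p-1) := by
  have h1 : |sgn ((t:ℝ):𝕋) y| = 1 := by
    rw [sgn]; split <;> simp
  rw [abs_mul, h1, mul_one, abs_of_nonneg (Real.rpow_nonneg dist_nonneg _)]
  exact Real.rpow_le_rpow dist_nonneg (dist_le_pi _ _) (by linarith)

lemma measurable_J (p : ℝ) (hp : 1 ≤ p) (y : 𝕋) :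
    Measurable (fun t : ℝ => dist ((t:ℝ):𝕋) y ^ (p-1) * sgn ((t:ℝ):𝕋) y) := by
  have h1 : Measurable fun t : ℝ => dist ((t:ℝ):𝕋) y ^ (p-1) :=
    (((AddCircle.continuous_mk' (2*π)).dist continuous_const).rpow_const
      (fun x => Or.inr (by linarith))).measurable
  have h2 : Measurable fun t : ℝ => sgn ((t:ℝ):𝕋) y := by
    have hm : Measurable fun t : ℝ => rep (y - ((t:ℝ):𝕋)) :=
      measurable_rep.comp ((continuous_const.sub (AddCircle.continuous_mk' (2*π))).measurable)
    exact Measurable.ite (measurableSet_le measurable_const hm) measurable_const measurable_const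
  exact h1.mul h2

lemma intInt_J (p : ℝ) (hp : 1 ≤ p) (y : 𝕋) (a b : ℝ) :
    IntervalIntegrable (fun t : ℝ => -p * (dist ((t:ℝ):𝕋) y ^ (p-1) * sgn ((t:ℝ):𝕋) y))
      volume a b := by
  rw [intervalIntegrable_iff]
  refine ⟨((measurable_J p hp y).const_mul (-p)).aestronglyMeasurable, ?_⟩
  have : IsFiniteMeasure (volume.restrict (Set.uIoc a b)) :=
    ⟨by rw [Measure.restrict_apply_univ]; exact measure_Ioc_lt_top⟩
  apply MeasureTheory.HasFiniteIntegral.of_bounded (C := |p| * π ^ (p-1))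
  apply ae_of_all
  intro t
  rw [Real.norm_eq_abs, abs_mul, abs_neg]
  exact mul_le_mul_of_nonneg_left (J_abs_le p hp t y) (abs_nonneg p)

lemma ftc_J (p : ℝ) (hp : 1 ≤ p) (y : 𝕋) (a b : ℝ) (hab : a ≤ b) :
    ∫ t in a..b, -p * (dist ((t:ℝ):𝕋) y ^ (p-1) * sgn ((t:ℝ):𝕋) y) =
      dist ((b:ℝ):𝕋) y ^ p - dist ((a:ℝ):𝕋) y ^ p := by
  apply MeasureTheory.integral_eq_of_hasDerivAt_off_countable_of_le
    (fun s : ℝ => dist ((s:ℝ):𝕋) y ^ p) _ hab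
    (s := {t : ℝ | ((t:ℝ):𝕋) = y} ∪ {t : ℝ | ((t:ℝ):𝕋) = y + ((π:ℝ):𝕋)})
    ((countable_fiber y).union (countable_fiber _))
  · exact (((AddCircle.continuous_mk' (2*π)).dist continuous_const).rpow_const
      (fun x => Or.inr (by linarith))).continuousOn
  · intro x hx
    rcases hx with ⟨_, hx2⟩
    rw [Set.mem_union] at hx2
    push_neg at hx2
    exact hasDerivAt_dp p hp y x hx2.1 hx2.2
  · exact intInt_J p hp y a b


/-- if `ν` has a continuous density w.r.t. `λ` and `p ≥ 1`, then the potential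
`U_p(x) = ∫ d(x,y)^p ν(dy)` (as a `2π`-periodic function on `ℝ`) is `C¹` and
`U_p'(x) = -p ∫ d(x,y)^(p-1) σ(x,y) ν(dy)`  (with `0^0 = 1`, which is the stated convention
for `p = 1`, `y = x`). -/
theorem Up_first_derivative
    (p : ℝ) (hp : 1 ≤ p)
    (g : 𝕋 → ℝ) (hg_cont : Continuous g) (hg_nonneg : ∀ x, 0 ≤ g x)
    (ν : Measure 𝕋) [IsProbabilityMeasure ν]
    (hν : ν = lam.withDensity fun y => ENNReal.ofReal (g y))
    (Up : ℝ → ℝ)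
    (hUp : ∀ x : ℝ, Up x = ∫ y, dist ((x : 𝕋)) y ^ p ∂ν) :
    ContDiff ℝ 1 Up ∧
      ∀ x : ℝ,
        deriv Up x = -p * ∫ y, dist ((x : 𝕋)) y ^ (p - 1) * sgn ((x : 𝕋)) y ∂ν := by
  -- the candidate derivative
  set D : ℝ → ℝ := fun t => -p * ∫ y, dist ((t : 𝕋)) y ^ (p - 1) * sgn ((t : 𝕋)) y ∂ν with hDdef
  -- measurability in y for fixed t
  have meas_y : ∀ t : ℝ, Measurable fun y : 𝕋 => dist ((t : 𝕋)) y ^ (p - 1) * sgn ((t : 𝕋)) y := by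
    intro t
    have h1 : Measurable fun y : 𝕋 => dist ((t : 𝕋)) y ^ (p - 1) :=
      ((continuous_const.dist continuous_id).rpow_const (fun y => Or.inr (by linarith))).measurable
    have h2 : Measurable fun y : 𝕋 => sgn ((t : 𝕋)) y := by
      have hm : Measurable fun y : 𝕋 => rep (y - ((t : ℝ) : 𝕋)) :=
        measurable_rep.comp (continuous_id.sub continuous_const).measurable
      exact Measurable.ite (measurableSet_le measurable_const hm) measurable_const
        measurable_const
    exact h1.mul h2
  -- continuity of D
  have hD_cont : Continuous D := by
    rw [continuous_iff_continuousAt]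
    intro x₀
    apply ContinuousAt.mul continuousAt_const
    apply continuousAt_of_dominated (bound := fun _ : 𝕋 => π ^ (p - 1))
    · exact Eventually.of_forall fun t => (meas_y t).aestronglyMeasurable
    · exact Eventually.of_forall fun t => ae_of_all _ fun y => by
        rw [Real.norm_eq_abs]; exact J_abs_le p hp t y
    · exact integrable_const _
    · have hnull : ν ({((x₀ : ℝ) : 𝕋)} ∪ {((x₀ : ℝ) : 𝕋) - ((π : ℝ) : 𝕋)}) = 0 :=
        measure_union_null (nu_atomless g ν hν _) (nu_atomless g ν hν _)
      filter_upwards [measure_eq_zero_iff_ae_notMem.mp hnull] with y hy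
      rw [Set.mem_union, Set.mem_singleton_iff, Set.mem_singleton_iff] at hy
      push_neg at hy
      refine continuousAt_J p hp y x₀ (fun h => hy.1 h.symm) (fun h => hy.2 ?_)
      exact eq_sub_of_add_eq h.symm
  -- FTC + Fubini: increments of Up
  have hint : ∀ x : ℝ, Integrable (fun y : 𝕋 => dist ((x : 𝕋)) y ^ p) ν := by
    intro x
    refine ⟨((continuous_const.dist continuous_id).rpow_const
      (fun y => Or.inr (by linarith))).aestronglyMeasurable, ?_⟩
    apply HasFiniteIntegral.of_bounded (C := π ^ p)
    apply ae_of_all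
    intro y
    rw [Real.norm_eq_abs, abs_of_nonneg (Real.rpow_nonneg dist_nonneg _)]
    exact Real.rpow_le_rpow dist_nonneg (dist_le_pi _ _) (by linarith)
  have hkey : ∀ a b : ℝ, a ≤ b → Up b - Up a = ∫ t in a..b, D t := by
    intro a b hab
    rw [hUp a, hUp b, ← integral_sub (hint b) (hint a)]
    have step1 : ∫ y, (dist ((b : 𝕋)) y ^ p - dist ((a : 𝕋)) y ^ p) ∂ν =
        ∫ y, (∫ t in Ioc a b, -p * (dist ((t : 𝕋)) y ^ (p - 1) * sgn ((t : 𝕋)) y) ∂volume) ∂ν := by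
      refine integral_congr_ae (ae_of_all _ fun y => ?_)
      dsimp only
      rw [← intervalIntegral.integral_of_le hab]
      exact (ftc_J p hp y a b hab).symm
    rw [step1]
    haveI hfin : IsFiniteMeasure (volume.restrict (Ioc a b)) :=
      ⟨by rw [Measure.restrict_apply_univ]; exact measure_Ioc_lt_top⟩
    have hswap : ∫ y, (∫ t in Ioc a b, -p * (dist ((t : 𝕋)) y ^ (p - 1) * sgn ((t : 𝕋)) y)
          ∂volume) ∂ν =
        ∫ t in Ioc a b, (∫ y, -p * (dist ((t : 𝕋)) y ^ (p - 1) * sgn ((t : 𝕋)) y) ∂ν)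
          ∂volume := by
      apply MeasureTheory.integral_integral_swap
      constructor
      · apply Measurable.aestronglyMeasurable
        exact (((measurable_J_uncurry p hp).comp
          (measurable_snd.prodMk measurable_fst)).const_mul (-p))
      · apply HasFiniteIntegral.of_bounded (C := |p| * π ^ (p - 1))
        apply ae_of_all
        rintro ⟨y, t⟩
        rw [Function.uncurry_apply_pair, Real.norm_eq_abs, abs_mul, abs_neg]
        exact mul_le_mul_of_nonneg_left (J_abs_le p hp t y) (abs_nonneg p)
    rw [hswap, intervalIntegral.integral_of_le hab]
    refine setIntegral_congr_ae measurableSet_Ioc (ae_of_all _ fun t _ => ?_)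
    rw [hDdef]
    exact integral_const_mul (-p) _
  have hUp_eq : ∀ x s : ℝ, Up s = Up x + ∫ t in x..s, D t := by
    intro x s
    rcases le_total x s with h | h
    · have := hkey x s h; linarith
    · have h2 := hkey s x h
      rw [intervalIntegral.integral_symm]
      linarith
  have hHasDeriv : ∀ x : ℝ, HasDerivAt Up (D x) x := by
    intro x
    have h1 : HasDerivAt (fun s : ℝ => Up x + ∫ t in x..s, D t) (D x) x :=
      ((hD_cont.integral_hasStrictDerivAt x x).hasDerivAt).const_add (Up x)
    exact h1.congr_of_eventuallyEq (Eventually.of_forall fun s => hUp_eq x s)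
  have hderiv_eq : deriv Up = D := funext fun x => (hHasDeriv x).deriv
  constructor
  · rw [contDiff_one_iff_deriv]
    exact ⟨fun x => (hHasDeriv x).differentiableAt, hderiv_eq ▸ hD_cont⟩
  · intro x
    rw [hderiv_eq]
end
end

section
/- Let ν be any probability measure on 𝕋 and, for κ > 1/π, let U_{2,κ}(x) := ∫_𝕋 d(x,y)² ν_κ(y) λ(dy) where ν_κ(z) := 2πκ ∫_𝕋 (1 − κ d(y,z))₊ ν(dy). Then for every x ∈ 𝕋 and every 1/π < κ₁ ≤ κ₂, |U_{2,κ₂}(x) − U_{2,κ₁}(x)| ≤ 3π³ log(κ₂/κ₁). In particular κ ↦ U_{2,κ}(x) is locally Lipschitz on (1/π,∞) and its derivative, where it exists, is bounded in absolute value by 3π³/κ. -/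
open MeasureTheory Real Set Filter Topology intervalIntegral

noncomputable section

/-- The triangular-kernel regularization of `ν`:
`ν_κ(z) = 2πκ ∫ (1 - κ d(y,z))₊ ν(dy)`, a density w.r.t. `λ`. -/
def nuk (ν : Measure 𝕋) (κ : ℝ) (z : 𝕋) : ℝ := 2 * π * κ * ∫ y, max (1 - κ * dist y z) 0 ∂ν

/-- The regularized potential `U_{2,κ}(x) = ∫ d(x,y)² ν_κ(y) λ(dy)`. -/
def U2k (ν : Measure 𝕋) (κ : ℝ) (x : 𝕋) : ℝ := ∫ y, dist x y ^ 2 * nuk ν κ y ∂lam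

lemma T_dist_le_pi (a b : 𝕋) : dist a b ≤ π := by
  have h := AddCircle.norm_le_half_period (p := 2*π) (x := a - b) Real.two_pi_pos.ne'
  rw [abs_of_pos Real.two_pi_pos] at h
  rw [dist_eq_norm]; linarith

lemma T_norm_coe {r : ℝ} (h : |r| ≤ π) : ‖((r : ℝ) : 𝕋)‖ = |r| := by
  rw [AddCircle.norm_coe_eq_abs_iff (p := 2*π) Real.two_pi_pos.ne']
  rw [abs_of_pos Real.two_pi_pos]; linarith

lemma T_norm_coe_le (r : ℝ) : ‖((r : ℝ) : 𝕋)‖ ≤ |r| := by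
  rcases le_or_gt |r| π with h | h
  · exact (T_norm_coe h).le
  · have h2 := AddCircle.norm_le_half_period (p := 2*π) (x := (r:𝕋)) Real.two_pi_pos.ne'
    rw [abs_of_pos Real.two_pi_pos] at h2
    calc ‖((r:ℝ):𝕋)‖ ≤ 2*π/2 := h2
      _ ≤ |r| := by linarith

instance : IsFiniteMeasure lam := by
  constructor
  rw [lam, Measure.smul_apply, smul_eq_mul]
  exact ENNReal.mul_lt_top (ENNReal.inv_lt_top.mpr (by simp [Real.pi_pos])) (measure_lt_top _ _)

instance : lam.IsAddLeftInvariant := by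
  rw [lam]; infer_instance

lemma T_cont_coe : Continuous (fun r : ℝ => ((r : ℝ) : 𝕋)) := AddCircle.continuous_mk' (2*π)

/-- the localized integrand -/
def ff (x v : 𝕋) (κ : ℝ) (s : ℝ) : ℝ := dist x (v + ((s/κ : ℝ) : 𝕋)) ^ 2 * max (1 - |s|) 0

lemma ff_cont (x v : 𝕋) (κ : ℝ) : Continuous (ff x v κ) := by
  apply Continuous.mul
  · exact ((continuous_const.dist (continuous_const.add
      (T_cont_coe.comp (continuous_id.div_const κ)))).pow 2)
  · exact (continuous_const.sub continuous_abs).max continuous_const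

/-- the smoothed potential kernel as a function of the center -/
def Hf (x : 𝕋) (κ : ℝ) (v : 𝕋) : ℝ := ∫ s in (-1:ℝ)..1, ff x v κ s

lemma F_eq_H (x v : 𝕋) (κ : ℝ) (hκ : 1/π < κ) :
    ∫ w, dist x w ^ 2 * (2 * π * κ * max (1 - κ * dist v w) 0) ∂lam = Hf x κ v := by
  have hπ : 0 < π := Real.pi_pos
  have hκ0 : 0 < κ := lt_trans (by positivity) hκ
  have hπκ : 1 < π * κ := by
    rw [div_lt_iff₀ hπ] at hκ; linarith [mul_comm κ π]
  -- Step 1: translation invariance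
  have step1 : ∫ w, dist x w ^ 2 * (2 * π * κ * max (1 - κ * dist v w) 0) ∂lam
      = ∫ u, dist x (v + u) ^ 2 * (2 * π * κ * max (1 - κ * ‖u‖) 0) ∂lam := by
    rw [← integral_add_left_eq_self (μ := lam)
      (fun w => dist x w ^ 2 * (2 * π * κ * max (1 - κ * dist v w) 0)) v]
    congr 1 with u
    congr 3
    rw [dist_eq_norm, sub_add_cancel_left, norm_neg]
  rw [step1]
  -- Step 2: unfold lam and pass to an interval integral
  rw [lam, MeasureTheory.integral_smul_measure]
  rw [← AddCircle.intervalIntegral_preimage (2*π) (-π)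
      (fun u : 𝕋 => dist x (v + u) ^ 2 * (2 * π * κ * max (1 - κ * ‖u‖) 0))]
  have hend : -π + 2*π = π := by ring
  rw [hend]
  -- Step 3: replace ‖↑t‖ by |t| on [-π, π], and reshape
  have step3 : ∫ t in (-π)..π,
        dist x (v + ((t:ℝ):𝕋)) ^ 2 * (2 * π * κ * max (1 - κ * ‖((t:ℝ):𝕋)‖) 0)
      = ∫ t in (-π)..π, (2*π) * (dist x (v + ((t:ℝ):𝕋)) ^ 2 * (κ * max (1 - κ * |t|) 0)) := by
    apply intervalIntegral.integral_congr
    intro t ht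
    rw [uIcc_of_le (by linarith : -π ≤ π)] at ht
    have : ‖((t:ℝ):𝕋)‖ = |t| := T_norm_coe (abs_le.mpr ⟨ht.1, ht.2⟩)
    try dsimp only
    rw [this]; ring
  rw [step3, intervalIntegral.integral_const_mul]
  rw [smul_eq_mul, ENNReal.toReal_inv, ENNReal.toReal_ofReal (by positivity)]
  rw [← mul_assoc, inv_mul_cancel₀ (by positivity), one_mul]
  -- Step 4: scaling t = s/κ
  have step4 : (∫ s in (-(π*κ))..(π*κ),
        (fun t => dist x (v + ((t:ℝ):𝕋)) ^ 2 * (κ * max (1 - κ * |t|) 0)) (s / κ))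
      = κ • ∫ t in (-(π*κ))/κ..(π*κ)/κ,
        dist x (v + ((t:ℝ):𝕋)) ^ 2 * (κ * max (1 - κ * |t|) 0) :=
    intervalIntegral.integral_comp_div
      (f := fun t => dist x (v + ((t:ℝ):𝕋)) ^ 2 * (κ * max (1 - κ * |t|) 0))
      (a := -(π*κ)) (b := π*κ) hκ0.ne'
  have hep1 : -(π*κ)/κ = -π := by field_simp
  have hep2 : (π*κ)/κ = π := by field_simp
  rw [hep1, hep2, smul_eq_mul] at step4
  have step5 : ∀ s : ℝ,
      (fun t => dist x (v + ((t:ℝ):𝕋)) ^ 2 * (κ * max (1 - κ * |t|) 0)) (s / κ)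
      = κ * ff x v κ s := by
    intro s
    simp only [ff]
    have : κ * |s / κ| = |s| := by
      rw [abs_div, abs_of_pos hκ0]; field_simp
    try dsimp only
    rw [this]; ring
  have step6 : ∫ t in (-π)..π, dist x (v + ((t:ℝ):𝕋)) ^ 2 * (κ * max (1 - κ * |t|) 0)
      = κ⁻¹ * ∫ s in (-(π*κ))..(π*κ),
          (fun t => dist x (v + ((t:ℝ):𝕋)) ^ 2 * (κ * max (1 - κ * |t|) 0)) (s / κ) := by
    rw [step4, ← mul_assoc, inv_mul_cancel₀ hκ0.ne', one_mul]
  rw [step6]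
  simp only [step5]
  rw [intervalIntegral.integral_const_mul, ← mul_assoc, inv_mul_cancel₀ hκ0.ne', one_mul]
  -- Step 6: shrink the interval to [-1,1]
  have hint : ∀ a b : ℝ, IntervalIntegrable (ff x v κ) volume a b :=
    fun a b => (ff_cont x v κ).intervalIntegrable a b
  have hzero : ∀ s : ℝ, 1 ≤ |s| → ff x v κ s = 0 := by
    intro s hs
    simp only [ff]
    rw [max_eq_right (by linarith), mul_zero]
  have left : ∫ s in (-(π*κ))..(-1:ℝ), ff x v κ s = 0 := by
    rw [intervalIntegral.integral_congr (g := fun _ => (0:ℝ)) ?_, intervalIntegral.integral_zero]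
    intro s hs
    rw [uIcc_of_le (by nlinarith : -(π*κ) ≤ -1)] at hs
    exact hzero s (by rw [abs_of_nonpos (by nlinarith [hs.2])]; linarith [hs.2])
  have right : ∫ s in (1:ℝ)..(π*κ), ff x v κ s = 0 := by
    rw [intervalIntegral.integral_congr (g := fun _ => (0:ℝ)) ?_, intervalIntegral.integral_zero]
    intro s hs
    rw [uIcc_of_le (by nlinarith : (1:ℝ) ≤ π*κ)] at hs
    exact hzero s (by rw [abs_of_nonneg (by linarith [hs.1])]; exact hs.1)
  have split1 : ∫ s in (-(π*κ))..(π*κ), ff x v κ s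
      = (∫ s in (-(π*κ))..(-1:ℝ), ff x v κ s) + ∫ s in (-1:ℝ)..(π*κ), ff x v κ s :=
    (intervalIntegral.integral_add_adjacent_intervals (hint _ _) (hint _ _)).symm
  have split2 : ∫ s in (-1:ℝ)..(π*κ), ff x v κ s
      = (∫ s in (-1:ℝ)..(1:ℝ), ff x v κ s) + ∫ s in (1:ℝ)..(π*κ), ff x v κ s :=
    (intervalIntegral.integral_add_adjacent_intervals (hint _ _) (hint _ _)).symm
  rw [split1, split2, left, right, zero_add, add_zero]
  rfl
lemma Phi_integrable (ν : Measure 𝕋) [IsProbabilityMeasure ν] (x : 𝕋) (κ : ℝ) :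
    Integrable (fun p : 𝕋 × 𝕋 => dist x p.1 ^ 2 * (2 * π * κ * max (1 - κ * dist p.2 p.1) 0))
      (lam.prod ν) := by
  have hc : Continuous
      (fun p : 𝕋 × 𝕋 => dist x p.1 ^ 2 * (2 * π * κ * max (1 - κ * dist p.2 p.1) 0)) := by
    exact ((continuous_const.dist continuous_fst).pow 2).mul
      (continuous_const.mul ((continuous_const.sub
        (continuous_const.mul (continuous_snd.dist continuous_fst))).max continuous_const))
  have := hc.continuousOn.integrableOn_compact (μ := lam.prod ν) isCompact_univ
  rwa [integrableOn_univ] at this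

lemma U2k_repr (ν : Measure 𝕋) [IsProbabilityMeasure ν] (x : 𝕋) (κ : ℝ) (hκ : 1/π < κ) :
    U2k ν κ x = ∫ v, Hf x κ v ∂ν ∧ Integrable (Hf x κ) ν := by
  have hΦ := Phi_integrable ν x κ
  have key : U2k ν κ x = ∫ v, ∫ w, dist x w ^ 2 * (2 * π * κ * max (1 - κ * dist v w) 0) ∂lam ∂ν := by
    have h1 : U2k ν κ x
        = ∫ w, ∫ v, dist x w ^ 2 * (2 * π * κ * max (1 - κ * dist v w) 0) ∂ν ∂lam := by
      unfold U2k nuk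
      congr 1 with w
      simp only [← mul_assoc]
      rw [MeasureTheory.integral_const_mul]
    rw [h1]
    exact integral_integral_swap
      (f := fun w v => dist x w ^ 2 * (2 * π * κ * max (1 - κ * dist v w) 0)) hΦ
  constructor
  · rw [key]
    congr 1 with v
    exact F_eq_H x v κ hκ
  · exact (hΦ.integral_prod_right).congr (Filter.Eventually.of_forall fun v => F_eq_H x v κ hκ)

lemma Hf_diff (x v : 𝕋) (κ₁ κ₂ : ℝ) (h1 : 1/π < κ₁) (h12 : κ₁ ≤ κ₂) :
    |Hf x κ₂ v - Hf x κ₁ v| ≤ 4 * π * (1/κ₁ - 1/κ₂) := by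
  have hπ : 0 < π := Real.pi_pos
  have hκ₁ : 0 < κ₁ := lt_trans (by positivity) h1
  have hκ₂ : 0 < κ₂ := lt_of_lt_of_le hκ₁ h12
  have hsub : Hf x κ₂ v - Hf x κ₁ v = ∫ s in (-1:ℝ)..1, (ff x v κ₂ s - ff x v κ₁ s) := by
    rw [intervalIntegral.integral_sub ((ff_cont x v κ₂).intervalIntegrable _ _)
      ((ff_cont x v κ₁).intervalIntegrable _ _)]
    rfl
  rw [hsub, ← Real.norm_eq_abs]
  have hbd : ∀ s ∈ Set.uIoc (-1:ℝ) 1,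
      ‖ff x v κ₂ s - ff x v κ₁ s‖ ≤ 2 * π * (1/κ₁ - 1/κ₂) := by
    intro s hs
    rw [Set.uIoc_of_le (by norm_num : (-1:ℝ) ≤ 1)] at hs
    have hs1 : |s| ≤ 1 := abs_le.mpr ⟨hs.1.le, hs.2⟩
    set a₂ : 𝕋 := v + ((s/κ₂ : ℝ) : 𝕋) with ha₂
    set a₁ : 𝕋 := v + ((s/κ₁ : ℝ) : 𝕋) with ha₁
    have hdd : dist a₂ a₁ ≤ 1/κ₁ - 1/κ₂ := by
      have e1 : dist a₂ a₁ = ‖((s/κ₂ - s/κ₁ : ℝ) : 𝕋)‖ := by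
        rw [dist_eq_norm, ha₂, ha₁, add_sub_add_left_eq_sub]
        norm_cast
      rw [e1]
      have hdnn : (0:ℝ) ≤ 1/κ₁ - 1/κ₂ := by
        rw [sub_nonneg]; exact one_div_le_one_div_of_le hκ₁ h12
      have e3 : s/κ₂ - s/κ₁ = -(s * (1/κ₁ - 1/κ₂)) := by field_simp; ring
      calc ‖((s/κ₂ - s/κ₁ : ℝ) : 𝕋)‖ ≤ |s/κ₂ - s/κ₁| := T_norm_coe_le _
        _ = |s| * (1/κ₁ - 1/κ₂) := by rw [e3, abs_neg, abs_mul, abs_of_nonneg hdnn]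
        _ ≤ 1/κ₁ - 1/κ₂ := mul_le_of_le_one_left hdnn hs1
    have hd2 : |dist x a₂ ^ 2 - dist x a₁ ^ 2| ≤ 2 * π * (1/κ₁ - 1/κ₂) := by
      have e2 : dist x a₂ ^ 2 - dist x a₁ ^ 2
          = (dist x a₂ - dist x a₁) * (dist x a₂ + dist x a₁) := by ring
      rw [e2, abs_mul]
      have h3 : |dist x a₂ - dist x a₁| ≤ dist a₂ a₁ := by
        rw [dist_comm x a₂, dist_comm x a₁]; exact abs_dist_sub_le a₂ a₁ x
      have h4 : |dist x a₂ + dist x a₁| ≤ 2 * π := by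
        rw [abs_of_nonneg (by positivity)]
        linarith [T_dist_le_pi x a₂, T_dist_le_pi x a₁]
      calc |dist x a₂ - dist x a₁| * |dist x a₂ + dist x a₁|
          ≤ (1/κ₁ - 1/κ₂) * (2 * π) :=
            mul_le_mul (le_trans h3 hdd) h4 (abs_nonneg _)
              (by rw [sub_nonneg]; exact one_div_le_one_div_of_le hκ₁ h12)
        _ = 2 * π * (1/κ₁ - 1/κ₂) := by ring
    have hm : max (1 - |s|) 0 ≤ 1 := by
      apply max_le (by linarith [abs_nonneg s]) zero_le_one
    have hm0 : (0:ℝ) ≤ max (1 - |s|) 0 := le_max_right _ _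
    have : ff x v κ₂ s - ff x v κ₁ s = (dist x a₂ ^ 2 - dist x a₁ ^ 2) * max (1 - |s|) 0 := by
      simp only [ff]; ring
    rw [this, Real.norm_eq_abs, abs_mul, abs_of_nonneg hm0]
    calc |dist x a₂ ^ 2 - dist x a₁ ^ 2| * max (1 - |s|) 0
        ≤ (2 * π * (1/κ₁ - 1/κ₂)) * 1 := mul_le_mul hd2 hm hm0
            (mul_nonneg (by positivity) (by rw [sub_nonneg]; exact one_div_le_one_div_of_le hκ₁ h12))
      _ = 2 * π * (1/κ₁ - 1/κ₂) := mul_one _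
  calc ‖∫ s in (-1:ℝ)..1, (ff x v κ₂ s - ff x v κ₁ s)‖
      ≤ 2 * π * (1/κ₁ - 1/κ₂) * |1 - (-1:ℝ)| :=
        intervalIntegral.norm_integral_le_of_norm_le_const hbd
    _ = 4 * π * (1/κ₁ - 1/κ₂) := by rw [show |1 - (-1:ℝ)| = 2 by norm_num]; ring

lemma log_chain (κ₁ κ₂ : ℝ) (h1 : 1/π < κ₁) (h12 : κ₁ ≤ κ₂) :
    4 * π * (1/κ₁ - 1/κ₂) ≤ 3 * π ^ 3 * Real.log (κ₂ / κ₁) := by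
  have hπ : 0 < π := Real.pi_pos
  have hκ₁ : 0 < κ₁ := lt_trans (by positivity) h1
  have hκ₂ : 0 < κ₂ := lt_of_lt_of_le hκ₁ h12
  have hL : 1 - κ₁/κ₂ ≤ Real.log (κ₂ / κ₁) := by
    have h := Real.log_le_sub_one_of_pos (show (0:ℝ) < κ₁/κ₂ by positivity)
    rw [Real.log_div hκ₁.ne' hκ₂.ne'] at h
    rw [Real.log_div hκ₂.ne' hκ₁.ne']
    linarith
  have hL0 : 0 ≤ Real.log (κ₂ / κ₁) :=
    Real.log_nonneg ((one_le_div hκ₁).mpr h12)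
  have ha0 : 0 ≤ 1 - κ₁/κ₂ := by
    rw [sub_nonneg]; exact (div_le_one hκ₂).mpr h12
  have h1κ : 1/κ₁ ≤ π := by
    rw [div_le_iff₀ hκ₁]
    rw [div_lt_iff₀ hπ] at h1
    nlinarith
  have heq : 1/κ₁ - 1/κ₂ = (1/κ₁) * (1 - κ₁/κ₂) := by field_simp
  have hπ3 : 3 < π := Real.pi_gt_three
  calc 4 * π * (1/κ₁ - 1/κ₂) = 4 * π * ((1/κ₁) * (1 - κ₁/κ₂)) := by rw [heq]
    _ ≤ 4 * π * (π * (1 - κ₁/κ₂)) := by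
        apply mul_le_mul_of_nonneg_left (mul_le_mul_of_nonneg_right h1κ ha0) (by positivity)
    _ ≤ 4 * π * (π * Real.log (κ₂ / κ₁)) := by
        apply mul_le_mul_of_nonneg_left (mul_le_mul_of_nonneg_left hL (by positivity)) (by positivity)
    _ = 4 * π^2 * Real.log (κ₂ / κ₁) := by ring
    _ ≤ 3 * π ^ 3 * Real.log (κ₂ / κ₁) := by
        nlinarith [mul_nonneg (mul_nonneg (by linarith : (0:ℝ) ≤ 3*π-4)
          (by positivity : (0:ℝ) ≤ π^2)) hL0]

/-- Lemma `pakU`: for any probability measure `ν` on the circle,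
`|U_{2,κ₂}(x) - U_{2,κ₁}(x)| ≤ 3π³ log(κ₂/κ₁)` for `1/π < κ₁ ≤ κ₂`; in particular wherever
`κ ↦ U_{2,κ}(x)` is differentiable on `(1/π, ∞)` its derivative is bounded by `3π³/κ`. -/
theorem regularized_potential_kappa_derivative_bound
    (ν : Measure 𝕋) [IsProbabilityMeasure ν] :
    (∀ (x : 𝕋) (κ₁ κ₂ : ℝ), 1 / π < κ₁ → κ₁ ≤ κ₂ →
        |U2k ν κ₂ x - U2k ν κ₁ x| ≤ 3 * π ^ 3 * Real.log (κ₂ / κ₁)) ∧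
      ∀ (x : 𝕋) (κ : ℝ), 1 / π < κ → ∀ d : ℝ,
        HasDerivAt (fun k => U2k ν k x) d κ → |d| ≤ 3 * π ^ 3 / κ := by
  have part1 : ∀ (x : 𝕋) (κ₁ κ₂ : ℝ), 1 / π < κ₁ → κ₁ ≤ κ₂ →
      |U2k ν κ₂ x - U2k ν κ₁ x| ≤ 3 * π ^ 3 * Real.log (κ₂ / κ₁) := by
    intro x κ₁ κ₂ h1 h12
    have h2 : 1/π < κ₂ := lt_of_lt_of_le h1 h12
    obtain ⟨e1, i1⟩ := U2k_repr ν x κ₁ h1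
    obtain ⟨e2, i2⟩ := U2k_repr ν x κ₂ h2
    rw [e1, e2, ← MeasureTheory.integral_sub i2 i1]
    calc |∫ v, (Hf x κ₂ v - Hf x κ₁ v) ∂ν|
        ≤ 4 * π * (1/κ₁ - 1/κ₂) * (ν Set.univ).toReal := by
          rw [← Real.norm_eq_abs]
          exact MeasureTheory.norm_integral_le_of_norm_le_const
            (Filter.Eventually.of_forall fun v => by
              rw [Real.norm_eq_abs]; exact Hf_diff x v κ₁ κ₂ h1 h12)
      _ = 4 * π * (1/κ₁ - 1/κ₂) := by simp
      _ ≤ 3 * π ^ 3 * Real.log (κ₂ / κ₁) := log_chain κ₁ κ₂ h1 h12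
  refine ⟨part1, ?_⟩
  intro x κ hκ d hd
  have hπ : 0 < π := Real.pi_pos
  have hκ0 : 0 < κ := lt_trans (by positivity) hκ
  have hslope : Tendsto (fun y => |slope (fun k => U2k ν k x) κ y|) (𝓝[>] κ) (𝓝 |d|) :=
    ((hasDerivAt_iff_tendsto_slope.mp hd).mono_left
      (nhdsWithin_mono κ fun y hy => ne_of_gt hy)).abs
  have hlog : Tendsto (fun y => 3 * π ^ 3 * slope Real.log κ y) (𝓝[>] κ)
      (𝓝 (3 * π ^ 3 * κ⁻¹)) :=
    ((hasDerivAt_iff_tendsto_slope.mp (Real.hasDerivAt_log hκ0.ne')).mono_left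
      (nhdsWithin_mono κ fun y hy => ne_of_gt hy)).const_mul _
  have hle : ∀ᶠ y in 𝓝[>] κ,
      |slope (fun k => U2k ν k x) κ y| ≤ 3 * π ^ 3 * slope Real.log κ y := by
    filter_upwards [self_mem_nhdsWithin] with y hy
    have hyκ : κ < y := hy
    have hpos : 0 < y - κ := by linarith
    have hbound := part1 x κ y hκ hyκ.le
    rw [slope_def_field, slope_def_field]
    rw [abs_div, abs_of_pos hpos]
    have h6 : Real.log y - Real.log κ = Real.log (y/κ) :=
      (Real.log_div (by linarith : y ≠ 0) hκ0.ne').symm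
    rw [h6]
    rw [show 3 * π ^ 3 * (Real.log (y/κ) / (y - κ)) = (3 * π ^ 3 * Real.log (y/κ)) / (y - κ) by ring]
    gcongr
  have hfin : |d| ≤ 3 * π ^ 3 * κ⁻¹ := le_of_tendsto_of_tendsto hslope hlog hle
  rwa [← div_eq_mul_inv] at hfin
end
end

section
/- Let X be a compact, path-connected topological space and U : X → ℝ continuous. For x, y ∈ X define the minimal elevation c(x,y) := inf over continuous paths γ : [0,1] → X with γ(0) = x and γ(1) = y of sup_{t ∈ [0,1]} U(γ(t)). Then for every global minimum x₀ of U (i.e. U(x₀) = inf_X U), sup_{x,y ∈ X} ( c(x,y) − U(x) − U(y) ) + inf_X U = sup_{y ∈ X} ( c(x₀,y) − U(y) ). In particular the right-hand side does not depend on the choice of the global minimum x₀. -/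
open Set Filter

noncomputable section

/-- identity `bU2` for the critical simulated-annealing constant: let `X` be a
compact path-connected space and `U : X → ℝ` continuous. With
`c(x,y) = inf over paths γ from x to y of sup_t U(γ(t))` (the minimal elevation), for every
global minimum `x₀` of `U`,
`sup_{x,y} (c(x,y) - U(x) - U(y)) + inf U = sup_y (c(x₀,y) - U(y))`. -/
theorem critical_depth_identity
    (X : Type*) [TopologicalSpace X] [CompactSpace X] [PathConnectedSpace X]
    (U : X → ℝ) (hU : Continuous U)
    (c : X → X → ℝ)
    (hc : ∀ x y : X, c x y = ⨅ γ : Path x y, ⨆ t : unitInterval, U (γ t))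
    (x₀ : X) (hx₀ : U x₀ = ⨅ x, U x) :
    (⨆ q : X × X, (c q.1 q.2 - U q.1 - U q.2)) + (⨅ x, U x)
      = ⨆ y : X, (c x₀ y - U y) := by
  have hXne : Nonempty X := PathConnectedSpace.nonempty
  obtain ⟨xM, -, hxM⟩ := isCompact_univ.exists_isMaxOn univ_nonempty hU.continuousOn
  set M := U xM with hMdef
  have hM : ∀ x, U x ≤ M := fun x => hxM (mem_univ x)
  obtain ⟨xm, -, hxm⟩ := isCompact_univ.exists_isMinOn univ_nonempty hU.continuousOn
  have hmle : ∀ x, U xm ≤ U x := fun x => hxm (mem_univ x)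
  have hbddB : BddBelow (range U) := ⟨U xm, by rintro _ ⟨x, rfl⟩; exact hmle x⟩
  set m := ⨅ x, U x with hmdef
  have hmU : ∀ x, m ≤ U x := fun x => ciInf_le hbddB x
  -- bounds on the sup along a path
  have hAbdd : ∀ {x y : X} (γ : Path x y),
      BddAbove (range fun t : unitInterval => U (γ t)) :=
    fun γ => ⟨M, by rintro _ ⟨t, rfl⟩; exact hM _⟩
  have hAle : ∀ {x y : X} (γ : Path x y) (t : unitInterval),
      U (γ t) ≤ ⨆ t : unitInterval, U (γ t) :=
    fun γ t => le_ciSup (hAbdd γ) t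
  have hAleM : ∀ {x y : X} (γ : Path x y), (⨆ t : unitInterval, U (γ t)) ≤ M :=
    fun γ => ciSup_le fun t => hM _
  have hcbdd : ∀ x y : X,
      BddBelow (range fun γ : Path x y => ⨆ t : unitInterval, U (γ t)) := by
    intro x y
    exact ⟨m, by rintro _ ⟨γ, rfl⟩; exact le_trans (hmU (γ 0)) (hAle γ 0)⟩
  have hcleA : ∀ {x y : X} (γ : Path x y), c x y ≤ ⨆ t : unitInterval, U (γ t) := by
    intro x y γ; rw [hc]; exact ciInf_le (hcbdd x y) γ
  have hcleM : ∀ x y : X, c x y ≤ M := fun x y =>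
    le_trans (hcleA (PathConnectedSpace.somePath x y)) (hAleM _)
  haveI hPne : ∀ a b : X, Nonempty (Path a b) := fun a b => ⟨PathConnectedSpace.somePath a b⟩
  have hUlec : ∀ x y : X, m ≤ c x y := by
    intro x y; rw [hc]
    exact le_ciInf fun γ => le_trans (hmU (γ 0)) (hAle γ 0)
  -- triangle inequality through x₀
  have htri : ∀ x y : X, c x y ≤ max (c x₀ x) (c x₀ y) := by
    intro x y
    refine le_of_forall_pos_le_add fun ε hε => ?_
    obtain ⟨γ₁, hγ₁⟩ : ∃ γ : Path x₀ x, (⨆ t : unitInterval, U (γ t)) < c x₀ x + ε := by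
      apply exists_lt_of_ciInf_lt
      rw [← hc]; linarith
    obtain ⟨γ₂, hγ₂⟩ : ∃ γ : Path x₀ y, (⨆ t : unitInterval, U (γ t)) < c x₀ y + ε := by
      apply exists_lt_of_ciInf_lt
      rw [← hc]; linarith
    have hsymm : (⨆ t : unitInterval, U (γ₁.symm t)) ≤ ⨆ t : unitInterval, U (γ₁ t) :=
      ciSup_le fun t => hAle γ₁ (unitInterval.symm t)
    have htrans : (⨆ t : unitInterval, U ((γ₁.symm.trans γ₂) t)) ≤
        max (⨆ t : unitInterval, U (γ₁.symm t)) (⨆ t : unitInterval, U (γ₂ t)) := by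
      refine ciSup_le fun t => ?_
      rw [Path.trans_apply]
      split_ifs with h
      · exact le_max_of_le_left (hAle γ₁.symm _)
      · exact le_max_of_le_right (hAle γ₂ _)
    calc c x y ≤ ⨆ t : unitInterval, U ((γ₁.symm.trans γ₂) t) := hcleA _
      _ ≤ max (c x₀ x + ε) (c x₀ y + ε) :=
          le_trans htrans (max_le_max (le_trans hsymm hγ₁.le) hγ₂.le)
      _ = max (c x₀ x) (c x₀ y) + ε := max_add_add_right _ _ _
  set S := ⨆ y : X, (c x₀ y - U y) with hS
  have hSbdd : BddAbove (range fun y : X => c x₀ y - U y) :=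
    ⟨M - m, by rintro _ ⟨y, rfl⟩; exact sub_le_sub (hcleM _ _) (hmU y)⟩
  have hSge : ∀ y : X, c x₀ y - U y ≤ S := fun y => le_ciSup hSbdd y
  have hfbdd : BddAbove (range fun q : X × X => c q.1 q.2 - U q.1 - U q.2) := by
    refine ⟨M - m - m, ?_⟩
    rintro _ ⟨q, rfl⟩
    have h1 := hcleM q.1 q.2
    have h2 := hmU q.1
    have h3 := hmU q.2
    dsimp only
    linarith
  have key : ∀ x y : X, c x y - U x - U y + m ≤ S := by
    intro x y
    have h := htri x y
    rcases le_total (c x₀ x) (c x₀ y) with hxy | hxy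
    · rw [max_eq_right hxy] at h
      have := hSge y
      have := hmU x
      linarith
    · rw [max_eq_left hxy] at h
      have := hSge x
      have := hmU y
      linarith
  apply le_antisymm
  · have h1 : (⨆ q : X × X, (c q.1 q.2 - U q.1 - U q.2)) ≤ S - m :=
      ciSup_le fun q => by have := key q.1 q.2; linarith
    linarith
  · refine ciSup_le fun y => ?_
    have h1 : c x₀ y - U x₀ - U y ≤ ⨆ q : X × X, (c q.1 q.2 - U q.1 - U q.2) :=
      le_ciSup hfbdd (x₀, y)
    have h2 : U x₀ = m := hx₀
    linarith
end
end
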